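/- Let m be an odd integer with m ≥ 58 and let Ĝ be a connected graph attaining the maximum spectral radius among all graphs in 𝒢(m,H(4,3)) other than K_2 ∨ ((m−1)/2)K_1. Let u* be a vertex of maximum Perron-vector entry, U = N(u*), and W = V(Ĝ)∖(U∪{u*}). Then every vertex w ∈ W has degree d(w) ≥ 2 in Ĝ. -/

import Mathlib

open Finset

/-- The spectral radius of a finite simple graph: the supremum of the real
spectrum of its adjacency matrix. -/
noncomputable def specRad {V : Type*} [Fintype V] [DecidableEq V] (G : SimpleGraph V) : ℝ :=
  letI := Classical.decRel G.Adj
  sSup (spectrum ℝ (SimpleGraph.adjMatrix ℝ G))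

/-- The fish graph `H(4,3)`: a 4-cycle 0-1-2-3-0 and a triangle 0-4-5 sharing vertex 0. -/
def H43 : SimpleGraph (Fin 6) :=
  SimpleGraph.fromEdgeSet {s(0, 1), s(1, 2), s(2, 3), s(3, 0), s(0, 4), s(4, 5), s(5, 0)}

/-- The bowtie graph `H(3,3)` (also `F₂`): two triangles 0-1-2 and 0-3-4 sharing vertex 0. -/
def H33 : SimpleGraph (Fin 5) :=
  SimpleGraph.fromEdgeSet {s(0, 1), s(1, 2), s(2, 0), s(0, 3), s(3, 4), s(4, 0)}

/-- `G` contains a (not necessarily induced) subgraph isomorphic to `H`. -/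
def HasSubgraphCopy {W V : Type*} (H : SimpleGraph W) (G : SimpleGraph V) : Prop :=
  ∃ f : W → V, Function.Injective f ∧ ∀ ⦃a b⦄, H.Adj a b → G.Adj (f a) (f b)

/-- `G` is `H`-free: it contains no subgraph isomorphic to `H`. -/
def GraphFree {W V : Type*} (H : SimpleGraph W) (G : SimpleGraph V) : Prop :=
  ¬ HasSubgraphCopy H G

/-- The book graph `K₂ ∨ k·K₁`, on vertices `Fin (k+2)`: vertices 0 and 1 form the `K₂`
and are joined to all of the `k` remaining independent vertices. -/
def bookGraph (k : ℕ) : SimpleGraph (Fin (k + 2)) where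
  Adj x y := x ≠ y ∧ (x.val < 2 ∨ y.val < 2)
  symm := ⟨fun _ _ h => ⟨h.1.symm, h.2.symm⟩⟩
  loopless := ⟨fun _ h => h.1 rfl⟩

/-- `S⁻`: the graph obtained from the book graph `K₂ ∨ k·K₁` by deleting one edge
incident to a vertex of degree two (the edge between vertices 1 and 2). -/
def bookMinus (k : ℕ) : SimpleGraph (Fin (k + 2)) where
  Adj x y := x ≠ y ∧ (x.val < 2 ∨ y.val < 2) ∧
    ¬(x.val = 1 ∧ y.val = 2) ∧ ¬(x.val = 2 ∧ y.val = 1)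
  symm := by
    refine ⟨?_⟩
    rintro x y ⟨h1, h2, h3, h4⟩
    exact ⟨h1.symm, h2.symm, fun h => h4 ⟨h.2, h.1⟩, fun h => h3 ⟨h.2, h.1⟩⟩
  loopless := ⟨fun _ h => h.1 rfl⟩

/-- The graph `K₁ ∨ (K_{1,t} ∪ 2K₁)` on `Fin (t+4)`: vertex 0 is the apex joined to all
other vertices, vertex 1 is the star center joined to the `t` leaves `4, …, t+3`,
and vertices 2, 3 are the two extra vertices (joined only to the apex). -/
def extGraph (t : ℕ) : SimpleGraph (Fin (t + 4)) where
  Adj x y := x ≠ y ∧ (x.val = 0 ∨ y.val = 0 ∨ (x.val = 1 ∧ 4 ≤ y.val) ∨ (y.val = 1 ∧ 4 ≤ x.val))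
  symm := by
    refine ⟨?_⟩
    rintro x y ⟨h1, h2⟩
    exact ⟨h1.symm, by tauto⟩
  loopless := ⟨fun _ h => h.1 rfl⟩

/-- The star `K_{1,r}` on `Fin (r+1)`, with center 0. -/
def starGraph (r : ℕ) : SimpleGraph (Fin (r + 1)) where
  Adj x y := x ≠ y ∧ (x.val = 0 ∨ y.val = 0)
  symm := ⟨fun _ _ h => ⟨h.1.symm, h.2.symm⟩⟩
  loopless := ⟨fun _ h => h.1 rfl⟩

/-- Membership in the family `𝒢(m, H(4,3))`: `H(4,3)`-free, `m` edges, no isolated vertices. -/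
def memFamily {V : Type*} [Fintype V] [DecidableEq V] (m : ℕ) (G : SimpleGraph V) : Prop :=
  GraphFree H43 G ∧ G.edgeSet.ncard = m ∧ ∀ v : V, ∃ w, G.Adj v w

/-- `e(S)`: the number of edges of `G` with both endpoints in `S`. -/
noncomputable def eIn {V : Type*} (G : SimpleGraph V) (S : Set V) : ℕ :=
  {e ∈ G.edgeSet | ∀ v ∈ e, v ∈ S}.ncard

/-- `e(S,T)`: the number of edges of `G` with one endpoint in `S` and the other in `T`. -/
noncomputable def eBetween {V : Type*} (G : SimpleGraph V) (S T : Set V) : ℕ :=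
  {e ∈ G.edgeSet | ∃ a ∈ S, ∃ b ∈ T, e = s(a, b)}.ncard

/-- `d_S(u)`: the number of neighbours of `u` inside `S`. -/
noncomputable def dIn {V : Type*} (G : SimpleGraph V) (S : Set V) (u : V) : ℕ :=
  (S ∩ G.neighborSet u).ncard

/-- `U = N(u)`. -/
def Uset {V : Type*} (G : SimpleGraph V) (u : V) : Set V := G.neighborSet u

/-- `W = V(G) \ (U ∪ {u})`. -/
def Wset {V : Type*} (G : SimpleGraph V) (u : V) : Set V :=
  Set.univ \ (G.neighborSet u ∪ {u})

/-- `U₀ = {v ∈ U : d_U(v) = 0}`. -/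
noncomputable def U0set {V : Type*} (G : SimpleGraph V) (u : V) : Set V :=
  {v ∈ G.neighborSet u | dIn G (G.neighborSet u) v = 0}

/-- `U₊ = U \ U₀`. -/
noncomputable def Uplusset {V : Type*} (G : SimpleGraph V) (u : V) : Set V :=
  {v ∈ G.neighborSet u | dIn G (G.neighborSet u) v ≠ 0}

/-- `G` attains the maximum spectral radius among all graphs in `𝒢(m, H(4,3))` other than
the book graph `K₂ ∨ ((m-1)/2)·K₁`. -/
def isExtremal {V : Type*} [Fintype V] [DecidableEq V] (m : ℕ) (G : SimpleGraph V) : Prop :=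
  memFamily m G ∧ ¬ Nonempty (G ≃g bookGraph ((m - 1) / 2)) ∧
    ∀ (n : ℕ) (H : SimpleGraph (Fin n)), memFamily m H →
      ¬ Nonempty (H ≃g bookGraph ((m - 1) / 2)) → specRad H ≤ specRad G

section SpecAux
open Matrix
variable {n : Type*} [Fintype n] [DecidableEq n]

lemma aux_psd (A : Matrix n n ℝ) (hA : A.IsHermitian) (S : ℝ)
    (h : ∀ i, hA.eigenvalues i ≤ S) : (S • (1 : Matrix n n ℝ) - A).PosSemidef := by
  set U : Matrix n n ℝ := (hA.eigenvectorUnitary : Matrix n n ℝ) with hU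
  have hUU : U * star U = 1 := (Matrix.mem_unitaryGroup_iff).mp hA.eigenvectorUnitary.2
  have hUU' : star U * U = 1 := (Matrix.mem_unitaryGroup_iff').mp hA.eigenvectorUnitary.2
  have hdiag : star U * (S • (1 : Matrix n n ℝ) - A) * U
      = diagonal (fun i => S - hA.eigenvalues i) := by
    have h1 : star U * A * U = diagonal (RCLike.ofReal ∘ hA.eigenvalues) :=
      by have := hA.conjStarAlgAut_star_eigenvectorUnitary; rwa [Unitary.conjStarAlgAut_star_apply] at this
    rw [Matrix.mul_sub, Matrix.sub_mul, h1, Matrix.mul_smul, mul_one, Matrix.smul_mul, hUU']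
    rw [Matrix.smul_one_eq_diagonal, diagonal_sub]
    congr 1
  have hpsd : (diagonal (fun i => S - hA.eigenvalues i)).PosSemidef := by
    refine Matrix.posSemidef_diagonal_iff.mpr fun i => ?_
    simpa using h i
  have h2 := hpsd.mul_mul_conjTranspose_same U
  rw [← Matrix.star_eq_conjTranspose, ← hdiag] at h2
  have heq : U * (star U * (S • (1 : Matrix n n ℝ) - A) * U) * star U
      = S • (1 : Matrix n n ℝ) - A := by
    rw [← Matrix.mul_assoc, ← Matrix.mul_assoc, hUU, Matrix.one_mul, Matrix.mul_assoc, hUU,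
      Matrix.mul_one]
  rwa [heq] at h2

lemma rayleigh_le (A : Matrix n n ℝ) (hA : A.IsHermitian) (S : ℝ)
    (h : ∀ i, hA.eigenvalues i ≤ S) (y : n → ℝ) :
    y ⬝ᵥ (A *ᵥ y) ≤ S * (y ⬝ᵥ y) := by
  have hp := (aux_psd A hA S h).dotProduct_mulVec_nonneg y
  have hs : star y = y := by funext i; simp
  rw [hs, Matrix.sub_mulVec, dotProduct_sub, Matrix.smul_mulVec, Matrix.one_mulVec,
    dotProduct_smul] at hp
  have : (0:ℝ) ≤ S * (y ⬝ᵥ y) - y ⬝ᵥ (A *ᵥ y) := by simpa [smul_eq_mul] using hp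
  linarith

lemma rayleigh_eq (A : Matrix n n ℝ) (hA : A.IsHermitian) (S : ℝ)
    (h : ∀ i, hA.eigenvalues i ≤ S) (y : n → ℝ)
    (heq : y ⬝ᵥ (A *ᵥ y) = S * (y ⬝ᵥ y)) : A *ᵥ y = S • y := by
  have hp := (aux_psd A hA S h).dotProduct_mulVec_zero_iff y
  have hs : star y = y := by funext i; simp
  rw [hs, Matrix.sub_mulVec, dotProduct_sub, Matrix.smul_mulVec, Matrix.one_mulVec,
    dotProduct_smul] at hp
  have h0 : S • (y ⬝ᵥ y) - y ⬝ᵥ (A *ᵥ y) = 0 := by rw [smul_eq_mul, heq]; ring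
  have h1 := hp.mp h0
  rw [sub_eq_zero] at h1
  exact h1.symm

end SpecAux

lemma specRad_eq_sSup {V : Type*} [Fintype V] [DecidableEq V] (G : SimpleGraph V)
    [inst : DecidableRel G.Adj] :
    specRad G = sSup (spectrum ℝ (G.adjMatrix ℝ)) := by
  have h : (letI := Classical.decRel G.Adj; SimpleGraph.adjMatrix ℝ G) = G.adjMatrix ℝ := by
    funext i j
    by_cases h : G.Adj i j <;> simp [SimpleGraph.adjMatrix, h]
  rw [specRad, h]

lemma adjMatrix_isHermitian {V : Type*} [Fintype V] (G : SimpleGraph V) [DecidableRel G.Adj] :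
    (G.adjMatrix ℝ).IsHermitian := by
  apply Matrix.ext
  intro i j
  by_cases h : G.Adj i j
  · have h' : G.Adj j i := h.symm
    simp [Matrix.conjTranspose_apply, h, h']
  · have h' : ¬ G.Adj j i := fun hh => h hh.symm
    simp [Matrix.conjTranspose_apply, h, h']

def rewire {V : Type*} (G : SimpleGraph V) (w w' u : V) (hwu : u ≠ w) : SimpleGraph V where
  Adj a b := (G.Adj a b ∧ ¬(a = w ∧ b = w') ∧ ¬(a = w' ∧ b = w)) ∨
    ((a = u ∧ b = w) ∨ (a = w ∧ b = u))
  symm := by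
    refine ⟨?_⟩
    rintro a b (⟨h1, h2, h3⟩ | (⟨rfl, rfl⟩ | ⟨rfl, rfl⟩))
    · exact Or.inl ⟨h1.symm, fun h => h3 ⟨h.2, h.1⟩, fun h => h2 ⟨h.2, h.1⟩⟩
    · exact Or.inr (Or.inr ⟨rfl, rfl⟩)
    · exact Or.inr (Or.inl ⟨rfl, rfl⟩)
  loopless := by
    refine ⟨?_⟩
    rintro a (⟨h1, _, _⟩ | (⟨rfl, rfl⟩ | ⟨rfl, rfl⟩))
    · exact G.irrefl h1
    · exact hwu rfl
    · exact hwu rfl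

lemma rewire_adj {V : Type*} {G : SimpleGraph V} {w w' u : V} {hwu : u ≠ w} {a b : V} :
    (rewire G w w' u hwu).Adj a b ↔ (G.Adj a b ∧ ¬(a = w ∧ b = w') ∧ ¬(a = w' ∧ b = w)) ∨
    ((a = u ∧ b = w) ∨ (a = w ∧ b = u)) := Iff.rfl

lemma H43_two_nbrs : ∀ i : Fin 6, ∃ j k : Fin 6, j ≠ k ∧ H43.Adj i j ∧ H43.Adj i k := by
  have hadj : ∀ a b : Fin 6, (s(a,b) ∈ ({s(0, 1), s(1, 2), s(2, 3), s(3, 0), s(0, 4), s(4, 5),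
      s(5, 0)} : Set (Sym2 (Fin 6))) ∧ a ≠ b) → H43.Adj a b := by
    intro a b h
    rw [H43, SimpleGraph.fromEdgeSet_adj]
    exact h
  intro i
  fin_cases i
  · exact ⟨1, 3, by decide, hadj _ _ (by simp), hadj _ _ (by simp)⟩
  · exact ⟨0, 2, by decide, hadj _ _ (by simp), hadj _ _ (by simp)⟩
  · exact ⟨1, 3, by decide, hadj _ _ (by simp), hadj _ _ (by simp)⟩
  · exact ⟨2, 0, by decide, hadj _ _ (by simp), hadj _ _ (by simp)⟩
  · exact ⟨0, 5, by decide, hadj _ _ (by simp), hadj _ _ (by simp)⟩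
  · exact ⟨4, 0, by decide, hadj _ _ (by simp), hadj _ _ (by simp)⟩

lemma walk_confine {V : Type*} {G : SimpleGraph V} {w w' : V}
    (hN : ∀ z, G.Adj w z → z = w') (hN' : ∀ z, G.Adj w' z → z = w) :
    ∀ {a b : V}, G.Walk a b → (a = w ∨ a = w') → (b = w ∨ b = w') := by
  intro a b p
  induction p with
  | nil => exact id
  | cons h p ih =>
    rintro (rfl | rfl)
    · exact ih (Or.inr (hN _ h))
    · exact ih (Or.inl (hN' _ h))

lemma book_two_nbrs (k : ℕ) (hk : 1 ≤ k) (v : Fin (k + 2)) :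
    ∃ a b : Fin (k + 2), a ≠ b ∧ (bookGraph k).Adj v a ∧ (bookGraph k).Adj v b := by
  by_cases h0 : v.val = 0
  · refine ⟨⟨1, by omega⟩, ⟨2, by omega⟩, by simp [Fin.ext_iff], (show _ ∧ _ from ⟨?_, ?_⟩), (show _ ∧ _ from ⟨?_, ?_⟩)⟩ <;>
      simp [Fin.ext_iff, h0] <;> omega
  · by_cases h1 : v.val = 1
    · refine ⟨⟨0, by omega⟩, ⟨2, by omega⟩, by simp [Fin.ext_iff], (show _ ∧ _ from ⟨?_, ?_⟩), (show _ ∧ _ from ⟨?_, ?_⟩)⟩ <;>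
        simp [Fin.ext_iff, h1] <;> omega
    · refine ⟨⟨0, by omega⟩, ⟨1, by omega⟩, by simp [Fin.ext_iff], (show _ ∧ _ from ⟨?_, ?_⟩), (show _ ∧ _ from ⟨?_, ?_⟩)⟩ <;>
        simp [Fin.ext_iff, h0, h1] <;> omega


open Matrix

/-- For odd `m ≥ 58`, if `Ĝ` is a connected spectral-extremal graph in
`𝒢(m,H(4,3)) \ {K₂ ∨ ((m-1)/2)K₁}`, then every vertex `w ∈ W` has degree at least 2. -/
theorem stmt_8 {V : Type*} [Fintype V] [DecidableEq V] (m : ℕ) (hm : 58 ≤ m) (hodd : Odd m)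
    (Ghat : SimpleGraph V) [DecidableRel Ghat.Adj] (hconn : Ghat.Connected)
    (hext : isExtremal m Ghat)
    (x : V → ℝ) (hpos : ∀ v, 0 < x v) (hunit : ∑ v : V, x v ^ 2 = 1)
    (heig : (SimpleGraph.adjMatrix ℝ Ghat).mulVec x = specRad Ghat • x)
    (ustar : V) (hmaxx : ∀ v, x v ≤ x ustar) :
    ∀ w ∈ Wset Ghat ustar, 2 ≤ (Ghat.neighborSet w).ncard := by
  classical
  intro w hw
  by_contra hdeg
  push_neg at hdeg
  obtain ⟨⟨hfree, hcard, hnoiso⟩, hnotbook, hmax⟩ := hext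
  -- basic facts about w
  have hwW : ¬ (Ghat.Adj ustar w ∨ w = ustar) := by
    intro h
    refine hw.2 ?_
    rcases h with h | h
    · exact Or.inl h
    · exact Or.inr h
  push_neg at hwW
  obtain ⟨hnadj_uw, hw_ne_u⟩ := hwW
  obtain ⟨w', hww'⟩ := hnoiso w
  -- the unique neighbour of w
  have hone : (Ghat.neighborSet w).ncard = 1 := by
    have h1 : 0 < (Ghat.neighborSet w).ncard :=
      (Set.ncard_pos (Set.toFinite _)).mpr ⟨w', hww'⟩
    omega
  obtain ⟨z0, hz0⟩ := Set.ncard_eq_one.mp hone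
  have hN : ∀ y, Ghat.Adj w y → y = w' := by
    have hw'z : w' = z0 := by
      have : w' ∈ Ghat.neighborSet w := hww'
      rwa [hz0, Set.mem_singleton_iff] at this
    intro y hy
    have : y ∈ Ghat.neighborSet w := hy
    rw [hz0, Set.mem_singleton_iff] at this
    rw [this, hw'z]
  have hw_ne_w' : w ≠ w' := Ghat.ne_of_adj hww'
  have hu_ne_w : ustar ≠ w := Ne.symm hw_ne_u
  have hu_ne_w' : ustar ≠ w' := by
    rintro rfl
    exact hnadj_uw hww'.symm
  -- w' has a neighbour other than w
  have hsec : ∃ z, Ghat.Adj w' z ∧ z ≠ w := by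
    by_contra hcon
    push_neg at hcon
    have hall : ∀ v : V, v = w ∨ v = w' := fun v =>
      walk_confine hN hcon ((hconn.preconnected w v).some) (Or.inl rfl)
    have hsub : Ghat.edgeSet ⊆ {s(w, w')} := by
      intro e he
      induction e using Sym2.ind with
      | _ a b =>
        rw [SimpleGraph.mem_edgeSet] at he
        rcases hall a with rfl | rfl
        · rw [hN b he]; rfl
        · rw [hcon b he]
          rw [Set.mem_singleton_iff, Sym2.eq_swap]
    have hle1 : m ≤ 1 := by
      calc m = Ghat.edgeSet.ncard := hcard.symm
        _ ≤ ({s(w, w')} : Set (Sym2 V)).ncard := Set.ncard_le_ncard hsub (Set.finite_singleton _)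
        _ = 1 := Set.ncard_singleton _
    omega
  obtain ⟨z2, hz2, hz2w⟩ := hsec
  -- the rewired graph
  set G' : SimpleGraph V := rewire Ghat w w' ustar hu_ne_w with hG'def
  have hG'nbr : G'.neighborSet w = {ustar} := by
    ext y
    rw [SimpleGraph.mem_neighborSet, Set.mem_singleton_iff, hG'def, rewire_adj]
    constructor
    · rintro (⟨h1, h2, _⟩ | (⟨h1, _⟩ | ⟨_, rfl⟩))
      · exact absurd ⟨rfl, hN y h1⟩ h2
      · exact absurd h1.symm hu_ne_w
      · rfl
    · rintro rfl
      exact Or.inr (Or.inr ⟨rfl, rfl⟩)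
  -- edge count of G'
  have hE : G'.edgeSet = (Ghat.edgeSet \ {s(w, w')}) ∪ {s(ustar, w)} := by
    ext e
    induction e using Sym2.ind with
    | _ a b =>
      simp only [SimpleGraph.mem_edgeSet, hG'def, rewire_adj, Set.mem_union, Set.mem_diff,
        Set.mem_singleton_iff, Sym2.eq_iff]
      tauto
  have hcard' : G'.edgeSet.ncard = m := by
    have h1 : s(ustar, w) ∉ Ghat.edgeSet \ {s(w, w')} := by
      rintro ⟨h, -⟩
      exact hnadj_uw h
    have h2 : s(w, w') ∈ Ghat.edgeSet := hww'
    rw [hE, Set.union_singleton, Set.ncard_insert_of_notMem h1 ((Set.toFinite _).diff),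
      Set.ncard_diff_singleton_of_mem h2, hcard]
    omega
  -- G' has no isolated vertices
  have hG'noiso : ∀ v : V, ∃ z, G'.Adj v z := by
    intro v
    by_cases hvw : v = w
    · exact ⟨ustar, by rw [hvw, hG'def]; exact Or.inr (Or.inr ⟨rfl, rfl⟩)⟩
    by_cases hvw' : v = w'
    · refine ⟨z2, ?_⟩
      rw [hvw', hG'def]
      exact Or.inl ⟨hz2, fun h => hw_ne_w' h.1.symm, fun h => hz2w h.2⟩
    · obtain ⟨y, hy⟩ := hnoiso v
      have hy_ne_w : y ≠ w := by
        rintro rfl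
        exact hvw' (hN v hy.symm)
      exact ⟨y, by rw [hG'def]; exact Or.inl ⟨hy, fun h => hvw h.1, fun h => hy_ne_w h.2⟩⟩
  -- G' is H43-free
  have hG'free : GraphFree H43 G' := by
    rintro ⟨f, finj, fhom⟩
    have hwnot : ∀ i, f i ≠ w := by
      intro i hi
      obtain ⟨j, k, hjk, hj, hk⟩ := H43_two_nbrs i
      have h1 : f j ∈ G'.neighborSet w := by rw [← hi]; exact fhom hj
      have h2 : f k ∈ G'.neighborSet w := by rw [← hi]; exact fhom hk
      rw [hG'nbr, Set.mem_singleton_iff] at h1 h2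
      exact hjk (finj (h1.trans h2.symm))
    refine hfree ⟨f, finj, fun a b hab => ?_⟩
    have := fhom hab
    rw [hG'def] at this
    rcases this with (⟨h1, _, _⟩ | (⟨_, h2⟩ | ⟨h1, _⟩))
    · exact h1
    · exact absurd h2 (hwnot b)
    · exact absurd h1 (hwnot a)
  have hmemG' : GraphFree H43 G' ∧ G'.edgeSet.ncard = m ∧ ∀ v : V, ∃ z, G'.Adj v z :=
    ⟨hG'free, hcard', hG'noiso⟩
  -- spectral radius comparison
  letI instG' : DecidableRel G'.Adj := Classical.decRel _
  set A : Matrix V V ℝ := Ghat.adjMatrix ℝ with hAdef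
  set A' : Matrix V V ℝ := G'.adjMatrix ℝ with hA'def
  set r : ℝ := specRad Ghat with hrdef
  set r' : ℝ := specRad G' with hr'def
  have hsymA' : A'.IsHermitian := adjMatrix_isHermitian G'
  have hbound' : ∀ i, hsymA'.eigenvalues i ≤ r' := by
    intro i
    rw [hr'def, specRad_eq_sSup]
    exact le_csSup (Matrix.finite_real_spectrum.bddAbove)
      (hsymA'.eigenvalues_mem_spectrum_real i)
  have hxx : x ⬝ᵥ x = 1 := by
    have h' : x ⬝ᵥ x = ∑ v, x v ^ 2 := by
      show ∑ v, x v * x v = ∑ v, x v ^ 2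
      exact Finset.sum_congr rfl fun v _ => (pow_two (x v)).symm
    rw [h', hunit]
  have heig' : A *ᵥ x = r • x := heig
  have hr : x ⬝ᵥ (A *ᵥ x) = r := by
    rw [heig', dotProduct_smul, hxx, smul_eq_mul, mul_one]
  -- entrywise comparison of A' and A
  have hentry : ∀ a b, A' a b = A a b
      + (if a = ustar ∧ b = w then 1 else 0) + (if a = w ∧ b = ustar then 1 else 0)
      - (if a = w ∧ b = w' then 1 else 0) - (if a = w' ∧ b = w then 1 else 0) := by
    intro a b
    by_cases c1 : a = ustar ∧ b = w
    · obtain ⟨rfl, rfl⟩ := c1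
      have h1 : G'.Adj a b := by rw [hG'def]; exact Or.inr (Or.inl ⟨rfl, rfl⟩)
      simp [hA'def, hAdef, SimpleGraph.adjMatrix, h1, hnadj_uw, hu_ne_w, hu_ne_w',
        hu_ne_w.symm, hu_ne_w'.symm, hw_ne_w', hw_ne_w'.symm]
    by_cases c2 : a = w ∧ b = ustar
    · obtain ⟨rfl, rfl⟩ := c2
      have h1 : G'.Adj a b := by rw [hG'def]; exact Or.inr (Or.inr ⟨rfl, rfl⟩)
      have h2 : ¬ Ghat.Adj a b := fun h => hnadj_uw h.symm
      simp [hA'def, hAdef, SimpleGraph.adjMatrix, h1, h2, hu_ne_w, hu_ne_w',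
        hu_ne_w.symm, hu_ne_w'.symm, hw_ne_w', hw_ne_w'.symm]
    by_cases c3 : a = w ∧ b = w'
    · obtain ⟨rfl, rfl⟩ := c3
      have h1 : ¬ G'.Adj a b := by
        rw [hG'def]
        rintro (⟨_, h2, _⟩ | (⟨h, _⟩ | ⟨_, h⟩))
        · exact h2 ⟨rfl, rfl⟩
        · exact hu_ne_w h.symm
        · exact hu_ne_w' h.symm
      simp [hA'def, hAdef, SimpleGraph.adjMatrix, h1, hww', hu_ne_w, hu_ne_w',
        hu_ne_w.symm, hu_ne_w'.symm, hw_ne_w', hw_ne_w'.symm]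
    by_cases c4 : a = w' ∧ b = w
    · obtain ⟨rfl, rfl⟩ := c4
      have h1 : ¬ G'.Adj a b := by
        rw [hG'def]
        rintro (⟨_, _, h2⟩ | (⟨h, _⟩ | ⟨h, _⟩))
        · exact h2 ⟨rfl, rfl⟩
        · exact hu_ne_w' h.symm
        · exact hw_ne_w' h.symm
      have h2 : Ghat.Adj a b := hww'.symm
      simp [hA'def, hAdef, SimpleGraph.adjMatrix, h1, h2, hu_ne_w, hu_ne_w',
        hu_ne_w.symm, hu_ne_w'.symm, hw_ne_w', hw_ne_w'.symm]
    · have h1 : G'.Adj a b ↔ Ghat.Adj a b := by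
        rw [hG'def, rewire_adj]
        constructor
        · rintro (⟨h, _, _⟩ | (h | h))
          · exact h
          · exact absurd h c1
          · exact absurd h c2
        · intro h
          exact Or.inl ⟨h, fun hh => c3 hh, fun hh => c4 hh⟩
      simp [hA'def, hAdef, SimpleGraph.adjMatrix, h1, c1, c2, c3, c4]
  -- row sums
  have hsumif : ∀ (a c d : V), ∑ b, (if a = c ∧ b = d then (1:ℝ) else 0) * x b
      = if a = c then x d else 0 := by
    intro a c d
    by_cases h : a = c
    · simp [h, ite_mul, Finset.sum_ite_eq']
    · simp [h]
  have hrowsum : ∀ a, (A' *ᵥ x) a = (A *ᵥ x) a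
      + ((if a = ustar then x w else 0) + (if a = w then x ustar else 0)
      - (if a = w then x w' else 0) - (if a = w' then x w else 0)) := by
    intro a
    have hmv : ∀ (M : Matrix V V ℝ), (M *ᵥ x) a = ∑ b, M a b * x b := fun M => rfl
    rw [hmv A', hmv A]
    calc ∑ b, A' a b * x b
        = ∑ b, (A a b * x b + ((if a = ustar ∧ b = w then (1:ℝ) else 0) * x b
          + (if a = w ∧ b = ustar then (1:ℝ) else 0) * x b
          - (if a = w ∧ b = w' then (1:ℝ) else 0) * x b
          - (if a = w' ∧ b = w then (1:ℝ) else 0) * x b)) := by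
          refine Finset.sum_congr rfl fun b _ => ?_
          rw [hentry a b]; ring
      _ = ∑ b, A a b * x b + ((∑ b, (if a = ustar ∧ b = w then (1:ℝ) else 0) * x b)
          + (∑ b, (if a = w ∧ b = ustar then (1:ℝ) else 0) * x b)
          - (∑ b, (if a = w ∧ b = w' then (1:ℝ) else 0) * x b)
          - (∑ b, (if a = w' ∧ b = w then (1:ℝ) else 0) * x b)) := by
          rw [Finset.sum_add_distrib, Finset.sum_sub_distrib, Finset.sum_sub_distrib,
            Finset.sum_add_distrib]
      _ = _ := by rw [hsumif, hsumif, hsumif, hsumif]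
  have hdot' : x ⬝ᵥ (A' *ᵥ x) = r + 2 * x w * (x ustar - x w') := by
    have e1 : x ⬝ᵥ (A' *ᵥ x) = ∑ a, x a * (A' *ᵥ x) a := rfl
    have e2 : x ⬝ᵥ (A *ᵥ x) = ∑ a, x a * (A *ᵥ x) a := rfl
    rw [e1]
    calc ∑ a, x a * (A' *ᵥ x) a
        = ∑ a, (x a * (A *ᵥ x) a + (x a * (if a = ustar then x w else 0)
          + x a * (if a = w then x ustar else 0)
          - x a * (if a = w then x w' else 0) - x a * (if a = w' then x w else 0))) := by
          refine Finset.sum_congr rfl fun a _ => ?_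
          rw [hrowsum a]; ring
      _ = ∑ a, x a * (A *ᵥ x) a + ((∑ a, x a * (if a = ustar then x w else 0))
          + (∑ a, x a * (if a = w then x ustar else 0))
          - (∑ a, x a * (if a = w then x w' else 0))
          - (∑ a, x a * (if a = w' then x w else 0))) := by
          rw [Finset.sum_add_distrib, Finset.sum_sub_distrib, Finset.sum_sub_distrib,
            Finset.sum_add_distrib]
      _ = r + (x ustar * x w + x w * x ustar - x w * x w' - x w' * x w) := by
          rw [← e2, hr]
          simp [mul_ite, mul_zero, Finset.sum_ite_eq']
      _ = r + 2 * x w * (x ustar - x w') := by ring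
  have h1 : x ⬝ᵥ (A' *ᵥ x) ≤ r' := by
    have := rayleigh_le A' hsymA' r' hbound' x
    rwa [hxx, mul_one] at this
  have h2 : r ≤ x ⬝ᵥ (A' *ᵥ x) := by
    rw [hdot']
    have hnn : 0 ≤ 2 * x w * (x ustar - x w') :=
      mul_nonneg (mul_nonneg (by norm_num) (hpos w).le) (sub_nonneg.mpr (hmaxx w'))
    linarith
  have hlt : r < r' := by
    rcases lt_or_eq_of_le (le_trans h2 h1) with h | h
    · exact h
    · exfalso
      have heqq : x ⬝ᵥ (A' *ᵥ x) = r' * (x ⬝ᵥ x) := by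
        rw [hxx, mul_one]
        exact le_antisymm h1 (h ▸ h2)
      have hev := rayleigh_eq A' hsymA' r' hbound' x heqq
      have hev_u := congrFun hev ustar
      rw [hrowsum ustar] at hev_u
      have hAu : (A *ᵥ x) ustar = r * x ustar := by rw [heig']; simp
      rw [hAu] at hev_u
      simp [hu_ne_w, hu_ne_w'] at hev_u
      rw [← h] at hev_u
      have : x w = 0 := by linarith
      exact absurd this (ne_of_gt (hpos w))
  -- transfer G' to Fin n
  set nV := Fintype.card V with hnV
  set e : V ≃ Fin nV := Fintype.equivFin V with hedef
  set Gm : SimpleGraph (Fin nV) := SimpleGraph.map e.toEmbedding G' with hGm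
  have φ : G' ≃g Gm := SimpleGraph.Iso.map e G'
  have hGm_adj : ∀ a b : Fin nV, Gm.Adj a b ↔ G'.Adj (e.symm a) (e.symm b) := by
    intro a b
    rw [hGm, SimpleGraph.map_adj]
    constructor
    · rintro ⟨u, v, h, rfl, rfl⟩
      simpa using h
    · intro h
      exact ⟨_, _, h, by simp, by simp⟩
  letI instGm : DecidableRel Gm.Adj := Classical.decRel _
  have hmemGm : memFamily m Gm := by
    refine ⟨?_, ?_, ?_⟩
    · rintro ⟨f, finj, fhom⟩
      exact hG'free ⟨fun i => e.symm (f i), fun i j hij => finj (e.symm.injective hij),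
        fun a b hab => (hGm_adj _ _).mp (fhom hab)⟩
    · have hc := Nat.card_congr (SimpleGraph.Iso.mapEdgeSet φ)
      rw [Nat.card_coe_set_eq, Nat.card_coe_set_eq] at hc
      rw [← hc, hcard']
    · intro v
      obtain ⟨z, hz⟩ := hG'noiso (e.symm v)
      exact ⟨e z, (hGm_adj v (e z)).mpr (by simpa using hz)⟩
  have hGmnotbook : ¬ Nonempty (Gm ≃g bookGraph ((m - 1) / 2)) := by
    rintro ⟨ψ⟩
    have χ : G' ≃g bookGraph ((m - 1) / 2) := φ.trans ψ
    have hd1 : (G'.neighborSet w).ncard = 1 := by rw [hG'nbr]; exact Set.ncard_singleton _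
    have hcongr := Nat.card_congr (χ.mapNeighborSet w)
    rw [Nat.card_coe_set_eq, Nat.card_coe_set_eq] at hcongr
    obtain ⟨a, b, hab, ha, hb⟩ := book_two_nbrs ((m - 1) / 2) (by omega) (χ w)
    have hsub : {a, b} ⊆ (bookGraph ((m - 1) / 2)).neighborSet (χ w) := by
      rintro y (rfl | rfl)
      · exact ha
      · exact hb
    have h2le : 2 ≤ ((bookGraph ((m - 1) / 2)).neighborSet (χ w)).ncard := by
      calc 2 = ({a, b} : Set (Fin ((m - 1) / 2 + 2))).ncard := (Set.ncard_pair hab).symm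
        _ ≤ _ := Set.ncard_le_ncard hsub (Set.toFinite _)
    rw [← hcongr, hd1] at h2le
    omega
  have hspecGm : specRad Gm = r' := by
    have hmat : Gm.adjMatrix ℝ = Matrix.reindexAlgEquiv ℝ ℝ e A' := by
      funext i j
      rw [Matrix.reindexAlgEquiv_apply, Matrix.reindex_apply]
      by_cases h : Gm.Adj i j
      · have h' : G'.Adj (e.symm i) (e.symm j) := (hGm_adj i j).mp h
        simp [SimpleGraph.adjMatrix, hA'def, h, h', Matrix.submatrix_apply]
      · have h' : ¬ G'.Adj (e.symm i) (e.symm j) := fun hh => h ((hGm_adj i j).mpr hh)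
        simp [SimpleGraph.adjMatrix, hA'def, h, h', Matrix.submatrix_apply]
    rw [specRad_eq_sSup, hmat, AlgEquiv.spectrum_eq, hr'def, specRad_eq_sSup, hA'def]
  have hfinal := hmax nV Gm hmemGm hGmnotbook
  rw [hspecGm] at hfinal
  exact absurd hfinal (not_le.mpr hlt)
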